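/- For any graphs G and H with χ(G) ≥ 2, we have χ_G(H) ≤ ⌈χ(H)/(χ(G)−1)⌉. -/
import Mathlib


open SimpleGraph

/-- `H` contains a copy of `G`: an injective map preserving adjacency. -/
def ContainsCopy {α β : Type*} (G : SimpleGraph α) (H : SimpleGraph β) : Prop :=
  ∃ f : α ↪ β, ∀ a b, G.Adj a b → H.Adj (f a) (f b)

/-- `H` is `G`-free. -/
def GFree {α β : Type*} (G : SimpleGraph α) (H : SimpleGraph β) : Prop :=
  ¬ ContainsCopy G H

/-- The `G`-free chromatic number of `H`. -/
noncomputable def gChrom {α β : Type*} (G : SimpleGraph α) (H : SimpleGraph β) : ℕ :=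
  sInf {k | ∃ c : β → Fin k, ∀ i, GFree G (H.induce {v | c v = i})}

/-- `H` is `G`-free `k`-critical. -/
def GFreeCritical {α β : Type*} (G : SimpleGraph α) (H : SimpleGraph β) (k : ℕ) : Prop :=
  gChrom G H = k ∧ ∀ F : H.Subgraph, F ≠ ⊤ → gChrom G F.coe ≤ k - 1

theorem stmt4 {α β : Type*} [Fintype α] [Fintype β]
    (G : SimpleGraph α) (H : SimpleGraph β) (m n : ℕ)
    (hG : G.chromaticNumber = m) (hH : H.chromaticNumber = n) (hm : 2 ≤ m) :
    gChrom G H ≤ ⌈((n : ℚ) / ((m : ℚ) - 1))⌉₊ := by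
  set k : ℕ := ⌈((n : ℚ) / ((m : ℚ) - 1))⌉₊ with hk
  have hm1 : 1 ≤ m - 1 := by omega
  have hmpos : (0:ℚ) < (m:ℚ) - 1 := by
    have : (2:ℚ) ≤ (m:ℚ) := by exact_mod_cast hm
    linarith
  -- n ≤ k * (m-1)
  have hnk : n ≤ k * (m - 1) := by
    have h1 : ((n : ℚ) / ((m : ℚ) - 1)) ≤ (k : ℚ) := Nat.le_ceil _
    have h2 : (n : ℚ) ≤ (k : ℚ) * ((m:ℚ) - 1) := by
      rwa [div_le_iff₀ hmpos] at h1
    have h3 : ((m:ℚ) - 1) = ((m - 1 : ℕ) : ℚ) := by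
      have : (1:ℚ) ≤ (m:ℚ) := by exact_mod_cast (by omega : 1 ≤ m)
      push_cast [Nat.cast_sub (by omega : 1 ≤ m)]; ring
    rw [h3] at h2
    exact_mod_cast h2
  -- coloring of H with n colors
  have hcol : H.Colorable n := by
    rw [← SimpleGraph.chromaticNumber_le_iff_colorable, hH]
  obtain ⟨c⟩ := hcol
  -- G is not (m-1)-colorable
  have hGnot : ¬ G.Colorable (m - 1) := by
    intro h
    have := h.chromaticNumber_le
    rw [hG, Nat.cast_le] at this
    omega
  -- define the partition
  have hdiv : ∀ v : β, (c v).val / (m - 1) < k := by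
    intro v
    rw [Nat.div_lt_iff_lt_mul (by omega : 0 < m - 1)]
    calc (c v).val < n := (c v).isLt
    _ ≤ k * (m-1) := hnk
  apply Nat.sInf_le
  refine ⟨fun v => ⟨(c v).val / (m - 1), hdiv v⟩, ?_⟩
  rintro i ⟨f, hf⟩
  apply hGnot
  refine ⟨⟨fun a => ⟨(c ((f a) : β)).val % (m - 1), Nat.mod_lt _ (by omega)⟩, ?_⟩⟩
  intro a b hab
  have hadj : H.Adj ((f a) : β) ((f b) : β) := hf a b hab
  have hne : c ((f a) : β) ≠ c ((f b) : β) := c.valid hadj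
  simp only [ne_eq, Fin.mk.injEq]
  intro hmod
  apply hne
  have hqa := (f a).2
  have hqb := (f b).2
  simp only [Set.mem_setOf_eq] at hqa hqb
  have hq : (c ((f a) : β)).val / (m - 1) = (c ((f b) : β)).val / (m - 1) := by
    have h := hqa.trans hqb.symm
    exact Fin.mk.inj_iff.mp h
  have hmod2 : (c ((f a) : β)).val % (m - 1) = (c ((f b) : β)).val % (m - 1) :=
    Fin.mk.inj_iff.mp hmod
  have : (c ((f a) : β)).val = (c ((f b) : β)).val := by
    calc (c ((f a) : β)).val
        = (m - 1) * ((c ((f a) : β)).val / (m - 1)) + (c ((f a) : β)).val % (m - 1) :=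
          (Nat.div_add_mod _ _).symm
      _ = (m - 1) * ((c ((f b) : β)).val / (m - 1)) + (c ((f b) : β)).val % (m - 1) := by
          rw [hq, hmod2]
      _ = (c ((f b) : β)).val := Nat.div_add_mod _ _
  exact Fin.ext this
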